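/- Noiseless T-DoG stability (one induction step): let $f$ be convex with minimizer $x^\star$, iterates $x_{k+1} = x_k - \eta_k \nabla f(x_k)$ with $\eta_k = \bar{r}_k/\sqrt{G_k'}$ where $\bar{r}_k = \max(\max_{i\le k}\|x_i - x_0\|, r_\epsilon)$ and $G_k' \ge 8^4\,(G_k + \bar{L}_k^2)\,(1 + \log\frac{G_k + \bar{L}_k^2}{\bar{L}_0^2})^2$ where $G_k = \sum_{i\le k}\|\nabla f(x_i)\|^2$ and $\bar{L}_k \ge \max_{i \le k}\|\nabla f(x_i)\|$ with $\bar{L}_0 > 0$. If $r_\epsilon \le 3 d_0$ where $d_0 = \|x_0 - x^\star\|$, then for all $t$, $\max_{k \le t}\|x_k - x_0\| \le 3 d_0$. -/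

import Mathlib

open Finset
open scoped RealInnerProductSpace

/-- Noiseless T-DoG stability (Proposition 3, noiseless case): for convex `f`
with (sub)gradient selection `gf`, iterates `x_{k+1} = x_k - η_k gf(x_k)` with
`η_k = r̄_k / √(G'_k)`, where `G'_k ≥ 8⁴ (G_k + L̄_k²)(1 + log((G_k + L̄_k²)/L̄₀²))²`,
`G_k = ∑_{i ≤ k} ‖gf(x_i)‖²`, and `L̄` a nondecreasing bound on the observed
gradient norms with `L̄₀ > 0`: if `r_ε ≤ 3 d₀`, then all iterates stay within
distance `3 d₀` of `x₀`. -/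
lemma tdog_integral_lemma (b : ℕ → ℝ) (hb0 : 0 < b 0) (hmono : ∀ k, b k ≤ b (k + 1)) (t : ℕ) :
    ∑ k ∈ Finset.range (t + 1),
      (b (k + 1) - b k) / (b (k + 1) * (1 + Real.log (b (k + 1) / b 0)) ^ 2) ≤ 1 := by
  have hbpos : ∀ k, 0 < b k := by
    intro k; induction k with
    | zero => exact hb0
    | succ n ih => exact lt_of_lt_of_le ih (hmono n)
  set s : ℕ → ℝ := fun k => 1 + Real.log (b k / b 0) with hs
  have hb0le : ∀ k, b 0 ≤ b k := by
    intro k; induction k with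
    | zero => exact le_rfl
    | succ n ih => exact le_trans ih (hmono n)
  have hs1 : ∀ k, 1 ≤ s k := by
    intro k
    have : (0:ℝ) ≤ Real.log (b k / b 0) :=
      Real.log_nonneg ((one_le_div hb0).mpr (hb0le k))
    simp [hs]; linarith
  have hsmono : ∀ k, s k ≤ s (k + 1) := by
    intro k
    have : Real.log (b k / b 0) ≤ Real.log (b (k+1) / b 0) :=
      Real.log_le_log (div_pos (hbpos k) hb0) (by
        exact div_le_div_of_nonneg_right (hmono k) hb0.le)
    simp [hs]; linarith
  have key : ∀ k, (b (k + 1) - b k) / (b (k + 1) * (s (k + 1)) ^ 2)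
      ≤ 1 / s k - 1 / s (k + 1) := by
    intro k
    have hsk := hs1 k
    have hsk1 := hs1 (k+1)
    have hskpos : 0 < s k := by linarith
    have hsk1pos : 0 < s (k+1) := by linarith
    have hA : (b (k + 1) - b k) / b (k + 1) ≤ s (k + 1) - s k := by
      have hlog : Real.log (b k / b (k+1)) ≤ b k / b (k+1) - 1 :=
        Real.log_le_sub_one_of_pos (div_pos (hbpos k) (hbpos (k+1)))
      have hdiff : s (k+1) - s k = Real.log (b (k+1)) - Real.log (b k) := by
        simp [hs, Real.log_div (ne_of_gt (hbpos _)) (ne_of_gt hb0)]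
      have h2 : Real.log (b k / b (k+1)) = Real.log (b k) - Real.log (b (k+1)) :=
        Real.log_div (ne_of_gt (hbpos k)) (ne_of_gt (hbpos (k+1)))
      have h3 : (b (k+1) - b k) / b (k+1) = 1 - b k / b (k+1) := by
        rw [sub_div, div_self (hbpos (k+1)).ne']
      rw [h3, hdiff]
      rw [h2] at hlog
      linarith
    calc (b (k + 1) - b k) / (b (k + 1) * (s (k + 1)) ^ 2)
        = ((b (k + 1) - b k) / b (k+1)) / (s (k+1))^2 := (div_div _ _ _).symm
      _ ≤ (s (k+1) - s k) / (s (k+1))^2 := by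
          exact div_le_div_of_nonneg_right hA (by positivity)
      _ ≤ (s (k+1) - s k) / (s k * s (k+1)) := by
          apply div_le_div_of_nonneg_left _ (by positivity) _
          · linarith [hsmono k]
          · nlinarith [hsmono k, hskpos, hsk1pos]
      _ = 1 / s k - 1 / s (k+1) := by
          rw [eq_comm, div_sub_div _ _ (ne_of_gt hskpos) (ne_of_gt hsk1pos), one_mul, mul_one]
  calc ∑ k ∈ Finset.range (t + 1),
      (b (k + 1) - b k) / (b (k + 1) * (1 + Real.log (b (k + 1) / b 0)) ^ 2)
      ≤ ∑ k ∈ Finset.range (t + 1), (1 / s k - 1 / s (k + 1)) :=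
        Finset.sum_le_sum fun k _ => key k
    _ = 1 / s 0 - 1 / s (t + 1) := Finset.sum_range_sub' (fun k => 1 / s k) (t+1)
    _ ≤ 1 := by
        have := hs1 (t+1)
        have h0 : s 0 = 1 := by simp [hs, div_self (ne_of_gt hb0)]
        rw [h0]
        have : 0 < 1 / s (t+1) := by positivity
        linarith

theorem tdog_noiseless_stability {H : Type*} [NormedAddCommGroup H]
    [InnerProductSpace ℝ H]
    (f : H → ℝ) (gf : H → H)
    (hconv : ∀ y z : H, f y + ⟪gf y, z - y⟫ ≤ f z)
    (xs : H) (hmin : ∀ y, f xs ≤ f y)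
    (x : ℕ → H) (rε : ℝ) (hrε : 0 < rε)
    (rbar : ℕ → ℝ)
    (hrbar : ∀ k, rbar k =
      max ((Finset.range (k + 1)).sup' Finset.nonempty_range_add_one
            (fun i => ‖x i - x 0‖)) rε)
    (G : ℕ → ℝ)
    (hG : ∀ k, G k = ∑ i ∈ Finset.range (k + 1), ‖gf (x i)‖ ^ 2)
    (Lbar : ℕ → ℝ)
    (hLbar : ∀ k, ∀ i ≤ k, ‖gf (x i)‖ ≤ Lbar k)
    (hLmono : ∀ k, Lbar k ≤ Lbar (k + 1))
    (hL0 : 0 < Lbar 0)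
    (G' : ℕ → ℝ)
    (hG'pos : ∀ k, 0 < G' k)
    (hG'ge : ∀ k,
      8 ^ 4 * (G k + Lbar k ^ 2)
          * (1 + Real.log ((G k + Lbar k ^ 2) / Lbar 0 ^ 2)) ^ 2 ≤ G' k)
    (hstep : ∀ k, x (k + 1) = x k - (rbar k / Real.sqrt (G' k)) • gf (x k))
    (hrε3 : rε ≤ 3 * ‖x 0 - xs‖) :
    ∀ k, ‖x k - x 0‖ ≤ 3 * ‖x 0 - xs‖ := by
  set d0 := ‖x 0 - xs‖ with hd0def
  have hd0 : 0 < d0 := by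
    have := norm_nonneg (x 0 - xs)
    rw [← hd0def] at this
    by_contra h
    push_neg at h
    have hz : d0 = 0 := le_antisymm h this
    rw [hz] at hrε3
    linarith
  -- positivity of Lbar
  have hLpos : ∀ k, 0 < Lbar k := by
    intro k; induction k with
    | zero => exact hL0
    | succ n ih => exact lt_of_lt_of_le ih (hLmono n)
  -- the sequence b
  set b : ℕ → ℝ := fun k => Nat.rec (Lbar 0 ^ 2) (fun n _ => G n + Lbar n ^ 2) k with hbdef
  have hb0 : b 0 = Lbar 0 ^ 2 := rfl
  have hbs : ∀ k, b (k + 1) = G k + Lbar k ^ 2 := fun k => rfl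
  have hGsucc : ∀ k, G (k + 1) = G k + ‖gf (x (k + 1))‖ ^ 2 := by
    intro k; rw [hG, hG, Finset.sum_range_succ]
  have hb0pos : 0 < b 0 := by rw [hb0]; positivity
  have hG0 : G 0 = ‖gf (x 0)‖ ^ 2 := by rw [hG]; simp
  have hbmono : ∀ k, b k ≤ b (k + 1) := by
    intro k
    cases k with
    | zero =>
      rw [hb0, hbs, hG0]
      nlinarith [sq_nonneg ‖gf (x 0)‖]
    | succ n =>
      rw [hbs, hbs, hGsucc]
      nlinarith [sq_nonneg ‖gf (x (n + 1))‖, hLmono n, hLpos n]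
  have hgap : ∀ k, ‖gf (x k)‖ ^ 2 ≤ b (k + 1) - b k := by
    intro k
    cases k with
    | zero =>
      rw [hb0, hbs, hG0]
      linarith
    | succ n =>
      rw [hbs, hbs, hGsucc]
      nlinarith [hLmono n, hLpos n]
  have hble : ∀ k, b 0 ≤ b k := by
    intro k; induction k with
    | zero => exact le_rfl
    | succ n ih => exact le_trans ih (hbmono n)
  have hbposall : ∀ k, 0 < b k := fun k => lt_of_lt_of_le hb0pos (hble k)
  -- bound on per-step normalized gradient sum
  have hkey : ∀ k, ‖gf (x k)‖ ^ 2 / G' k ≤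
      (b (k + 1) - b k) / (b (k + 1) * (1 + Real.log (b (k + 1) / b 0)) ^ 2) / 4096 := by
    intro k
    have hbpos : 0 < b (k + 1) := hbposall (k + 1)
    have hs1 : (1:ℝ) ≤ 1 + Real.log (b (k + 1) / b 0) := by
      have : (0:ℝ) ≤ Real.log (b (k + 1) / b 0) := by
        apply Real.log_nonneg
        rw [one_le_div hb0pos]
        exact hble (k + 1)
      linarith
    have hDpos : 0 < 4096 * (b (k + 1) * (1 + Real.log (b (k + 1) / b 0)) ^ 2) := by positivity
    have hDle : 4096 * (b (k + 1) * (1 + Real.log (b (k + 1) / b 0)) ^ 2) ≤ G' k := by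
      have := hG'ge k
      rw [← hbs k, ← hb0] at this
      calc 4096 * (b (k + 1) * (1 + Real.log (b (k + 1) / b 0)) ^ 2)
          = 8 ^ 4 * b (k + 1) * (1 + Real.log (b (k + 1) / b 0)) ^ 2 := by ring
        _ ≤ G' k := this
    calc ‖gf (x k)‖ ^ 2 / G' k
        ≤ ‖gf (x k)‖ ^ 2 / (4096 * (b (k + 1) * (1 + Real.log (b (k + 1) / b 0)) ^ 2)) :=
          div_le_div_of_nonneg_left (by positivity) hDpos hDle
      _ ≤ (b (k + 1) - b k) / (4096 * (b (k + 1) * (1 + Real.log (b (k + 1) / b 0)) ^ 2)) :=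
          div_le_div_of_nonneg_right (hgap k) hDpos.le
      _ = (b (k + 1) - b k) / (b (k + 1) * (1 + Real.log (b (k + 1) / b 0)) ^ 2) / 4096 := by
          rw [div_div, mul_comm]
  have hsumkey : ∀ t, ∑ k ∈ Finset.range (t + 1), ‖gf (x k)‖ ^ 2 / G' k ≤ 1 / 4096 := by
    intro t
    calc ∑ k ∈ Finset.range (t + 1), ‖gf (x k)‖ ^ 2 / G' k
        ≤ ∑ k ∈ Finset.range (t + 1),
            (b (k + 1) - b k) / (b (k + 1) * (1 + Real.log (b (k + 1) / b 0)) ^ 2) / 4096 :=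
          Finset.sum_le_sum fun k _ => hkey k
      _ = (∑ k ∈ Finset.range (t + 1),
            (b (k + 1) - b k) / (b (k + 1) * (1 + Real.log (b (k + 1) / b 0)) ^ 2)) / 4096 :=
          (Finset.sum_div _ _ _).symm
      _ ≤ 1 / 4096 := by
          have := tdog_integral_lemma b hb0pos hbmono t
          linarith
  -- positivity / monotonicity of rbar
  have hrbge : ∀ k, rε ≤ rbar k := by
    intro k; rw [hrbar k]; exact le_max_right _ _
  have hrbpos : ∀ k, 0 < rbar k := fun k => lt_of_lt_of_le hrε (hrbge k)
  -- descent inequality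
  have hdesc : ∀ k, ‖x (k + 1) - xs‖ ^ 2 ≤ ‖x k - xs‖ ^ 2 + (rbar k) ^ 2 / G' k * ‖gf (x k)‖ ^ 2 := by
    intro k
    set η := rbar k / Real.sqrt (G' k) with hη
    have hηnn : 0 ≤ η := div_nonneg (hrbpos k).le (Real.sqrt_nonneg _)
    have hinner : 0 ≤ ⟪gf (x k), x k - xs⟫ := by
      have h1 := hconv (x k) xs
      have h2 := hmin (x k)
      have h3 : ⟪gf (x k), xs - x k⟫ ≤ 0 := by linarith
      have h4 : xs - x k = -(x k - xs) := by abel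
      rw [h4, inner_neg_right] at h3
      linarith
    have hx : x (k + 1) - xs = (x k - xs) - η • gf (x k) := by
      rw [hstep k, ← hη]; abel
    rw [hx, norm_sub_sq_real]
    have hiη : ⟪x k - xs, η • gf (x k)⟫ = η * ⟪gf (x k), x k - xs⟫ := by
      rw [real_inner_smul_right, real_inner_comm]
    have hns : ‖η • gf (x k)‖ ^ 2 = (rbar k) ^ 2 / G' k * ‖gf (x k)‖ ^ 2 := by
      rw [norm_smul, Real.norm_eq_abs, mul_pow, sq_abs, hη, div_pow,
        Real.sq_sqrt (hG'pos k).le]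
    rw [hiη, hns]
    nlinarith [mul_nonneg hηnn hinner]
  -- telescoped
  have htel : ∀ t, ‖x (t + 1) - xs‖ ^ 2 ≤
      d0 ^ 2 + ∑ k ∈ Finset.range (t + 1), (rbar k) ^ 2 / G' k * ‖gf (x k)‖ ^ 2 := by
    intro t
    induction t with
    | zero => simpa using hdesc 0
    | succ n ih =>
      rw [Finset.sum_range_succ]
      have := hdesc (n + 1)
      linarith
  -- main induction
  have main : ∀ t, ∀ k ≤ t, ‖x k - x 0‖ ≤ 3 * d0 := by
    intro t
    induction t with
    | zero =>
      intro k hk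
      interval_cases k
      simp only [sub_self, norm_zero]
      positivity
    | succ n ih =>
      intro k hk
      rcases Nat.lt_succ_iff_lt_or_eq.mp (Nat.lt_succ_of_le hk) with h | h
      · exact ih k (Nat.lt_succ_iff.mp h)
      · subst h
        -- bound rbar i for i ≤ n
        have hrb3 : ∀ i, i ≤ n → rbar i ≤ 3 * d0 := by
          intro i hi
          rw [hrbar i]
          apply max_le _ hrε3
          apply Finset.sup'_le
          intro j hj
          have hji : j ≤ i := Nat.lt_succ_iff.mp (Finset.mem_range.mp hj)
          exact ih j (le_trans hji hi)
        have hsum : ∑ k ∈ Finset.range (n + 1), (rbar k) ^ 2 / G' k * ‖gf (x k)‖ ^ 2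
            ≤ (3 * d0) ^ 2 * (1 / 4096) := by
          calc ∑ k ∈ Finset.range (n + 1), (rbar k) ^ 2 / G' k * ‖gf (x k)‖ ^ 2
              ≤ ∑ k ∈ Finset.range (n + 1), (3 * d0) ^ 2 * (‖gf (x k)‖ ^ 2 / G' k) := by
                apply Finset.sum_le_sum
                intro i hi
                have h1 : (rbar i) ^ 2 ≤ (3 * d0) ^ 2 := by
                  have := hrb3 i (Nat.lt_succ_iff.mp (Finset.mem_range.mp hi))
                  nlinarith [hrbpos i]
                have heq : (rbar i) ^ 2 / G' i * ‖gf (x i)‖ ^ 2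
                    = (rbar i) ^ 2 * (‖gf (x i)‖ ^ 2 / G' i) := by ring
                rw [heq]
                exact mul_le_mul_of_nonneg_right h1 (div_nonneg (sq_nonneg _) (hG'pos i).le)
            _ = (3 * d0) ^ 2 * ∑ k ∈ Finset.range (n + 1), ‖gf (x k)‖ ^ 2 / G' k :=
                (Finset.mul_sum _ _ _).symm
            _ ≤ (3 * d0) ^ 2 * (1 / 4096) := by
                apply mul_le_mul_of_nonneg_left (hsumkey n)
                positivity
        have hd2 : ‖x (n + 1) - xs‖ ^ 2 ≤ (2 * d0) ^ 2 := by
          have := htel n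
          nlinarith
        have hd1 : ‖x (n + 1) - xs‖ ≤ 2 * d0 := by
          nlinarith [norm_nonneg (x (n + 1) - xs)]
        calc ‖x (n + 1) - x 0‖ = ‖(x (n + 1) - xs) + (xs - x 0)‖ := by abel_nf
          _ ≤ ‖x (n + 1) - xs‖ + ‖xs - x 0‖ := norm_add_le _ _
          _ ≤ 2 * d0 + d0 := by
              have hxs : ‖xs - x 0‖ = d0 := by rw [hd0def, norm_sub_rev]
              rw [hxs]
              exact add_le_add hd1 le_rfl
          _ = 3 * d0 := by ring
  intro k
  exact main k k le_rfl
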